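/- Let T > 0 and a > 0. For δ ≥ 0 and s ∈ ℂ with Re(s) ≥ 0, define f_δ(s) = (|s|² e^{−2 Re(s) T} + (conj(s) − a)(s − a − δ)) / ((√2 conj(s) + a)(√2 s + a + δ)) (the denominator is nonzero for Re(s) ≥ 0). Then there exists δ₀ > 0 such that for every δ with 0 ≤ δ < δ₀ there exists m > 0 such that Re(f_δ(s)) > m for all s ∈ ℂ with Re(s) ≥ 0. -/

import Mathlib

set_option maxHeartbeats 1000000

private lemma auxCase1 (a δ x y c m uE : ℝ) (ha : 0 < a) (hx : 0 ≤ x) (hδ0 : 0 ≤ δ)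
    (hδa : δ ≤ a/8) (hc0 : 0 ≤ c) (hc3 : c ≤ 3/2) (huE : 0 ≤ uE)
    (hm0 : 0 ≤ m) (hm1 : m ≤ 1/1000) (h1 : a^2/4 ≤ (x-a)^2 + y^2) :
    8*m*(2*(x^2+y^2)+2*c*a*x+a^2) + δ^2 ≤ uE + (x-a)^2 + y^2 - δ*(x-a) := by
  have hnwB : 2*(x^2+y^2)+2*c*a*x+a^2 ≤ 47*((x-a)^2+y^2) := by
    nlinarith [sq_nonneg (x-2*a), sq_nonneg (x-a), sq_nonneg y,
      mul_nonneg (mul_nonneg (show (0:ℝ) ≤ 3 - 2*c by linarith) ha.le) hx]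
  have hnw0 : (0:ℝ) ≤ 2*(x^2+y^2)+2*c*a*x+a^2 := by
    nlinarith [mul_nonneg (mul_nonneg hc0 ha.le) hx, sq_nonneg x, sq_nonneg y]
  have h8 : m*(2*(x^2+y^2)+2*c*a*x+a^2) ≤ (1/1000)*(47*((x-a)^2+y^2)) := by
    apply mul_le_mul hm1 hnwB hnw0 (by norm_num)
  nlinarith [sq_nonneg (x-a-2*δ), mul_le_mul hδa hδa hδ0 (by positivity : (0:ℝ) ≤ a/8)]

private lemma auxCase2 (a δ x y c m q uE : ℝ) (ha : 0 < a) (hx : 0 ≤ x) (hδ0 : 0 ≤ δ)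
    (hδa : δ ≤ a/8) (hc0 : 0 ≤ c) (hc3 : c ≤ 3/2) (hq : 0 < q)
    (hδq : δ ≤ q/(2*a)) (hm0 : 0 ≤ m) (hm : m ≤ q/(200*a^2))
    (h2 : (x-a)^2 + y^2 < a^2/4) (huE : q ≤ uE) :
    8*m*(2*(x^2+y^2)+2*c*a*x+a^2) + δ^2 ≤ uE + (x-a)^2 + y^2 - δ*(x-a) := by
  have hx1 : x ≤ 3*a/2 := by nlinarith [sq_nonneg y]
  have hnwB : 2*(x^2+y^2)+2*c*a*x+a^2 ≤ 11*a^2 := by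
    nlinarith [mul_nonneg (mul_nonneg (show (0:ℝ) ≤ 3-2*c by linarith) ha.le) hx,
      mul_nonneg ha.le (show (0:ℝ) ≤ 3*a/2 - x by linarith), sq_nonneg (x-a)]
  have hnw0 : (0:ℝ) ≤ 2*(x^2+y^2)+2*c*a*x+a^2 := by
    nlinarith [mul_nonneg (mul_nonneg hc0 ha.le) hx, sq_nonneg x, sq_nonneg y]
  have key1 : q/(2*a)*(a/2) = q/4 := by field_simp; ring
  have key2 : q/(2*a)*(a/8) = q/16 := by field_simp; ring
  have key3 : q/(200*a^2)*(11*a^2) = 11*q/200 := by field_simp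
  have hδ1 : δ * (x - a) ≤ q/4 := by
    have t1 : δ * (x - a) ≤ δ * (a/2) :=
      mul_le_mul_of_nonneg_left (by nlinarith [sq_nonneg y]) hδ0
    have t2 : δ * (a/2) ≤ q/(2*a) * (a/2) := mul_le_mul_of_nonneg_right hδq (by positivity)
    linarith
  have hδ2 : δ^2 ≤ q/16 := by
    have t1 : δ^2 ≤ δ * (a/8) := by nlinarith
    have t2 : δ * (a/8) ≤ q/(2*a) * (a/8) := mul_le_mul_of_nonneg_right hδq (by positivity)
    linarith
  have h8m : m*(2*(x^2+y^2)+2*c*a*x+a^2) ≤ 11*q/200 := by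
    have := mul_le_mul hm hnwB hnw0 (by positivity)
    linarith
  nlinarith [huE, sq_nonneg (x-a), sq_nonneg y]

private lemma auxAssemble (m nw K P δ c x u a : ℝ) (hm : 0 < m) (hnw : 0 < nw) (hK : 0 < K)
    (hP : 0 ≤ P) (hδ0 : 0 ≤ δ) (hcxa : 0 ≤ c*x + a) (hca : 0 ≤ (c-1)*a*x)
    (hcu : c*u ≤ nw) (hK4 : K ≤ 4*nw)
    (hstar : 8*m*nw + δ^2 ≤ P - δ*(x-a)) :
    m*(nw*K) < P*nw + δ*P*(c*x+a) - δ*nw*(x-a) - δ^2*(c*u-(c-1)*a*x-a^2) := by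
  nlinarith [mul_le_mul_of_nonneg_left hstar hnw.le,
    mul_le_mul_of_nonneg_left hK4 (by positivity : (0:ℝ) ≤ 2*m*nw),
    mul_nonneg (mul_nonneg hδ0 hP) hcxa,
    mul_nonneg (sq_nonneg δ) hca, sq_nonneg (δ*a),
    mul_le_mul_of_nonneg_left hcu (sq_nonneg δ),
    mul_pos hm (mul_pos hnw hK)]

private lemma key_ineq (T a δ x y c : ℝ) (hT : 0 < T) (ha : 0 < a) (hx : 0 ≤ x) (hδ0 : 0 ≤ δ)
    (hc2 : c ^ 2 = 2) (hc1 : 1 ≤ c) (hc3 : c ≤ 3/2)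
    (hδa : δ ≤ a / 8) (hδc : δ ≤ a ^ 2 / 4 * Real.exp (-(3 * a * T)) / (2 * a)) :
    min (1/1000) (a ^ 2 / 4 * Real.exp (-(3 * a * T)) / (200 * a ^ 2)) <
      (((x^2+y^2)*Real.exp (-2*x*T) + (x-a)^2 + y^2) * (c^2*(x^2+y^2) + 2*c*a*x + a^2)
        + δ * ((x^2+y^2)*Real.exp (-2*x*T) + (x-a)^2 + y^2) * (c*x+a)
        - δ * (c^2*(x^2+y^2) + 2*c*a*x + a^2) * (x-a)
        - δ^2 * (c*(x^2+y^2) - (c-1)*a*x - a^2)) /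
      ((c^2*(x^2+y^2) + 2*c*a*x + a^2) *
        ((c^2*(x^2+y^2) + 2*c*a*x + a^2) + 2*δ*(c*x+a) + δ^2)) := by
  have hc0 : 0 < c := by linarith
  have hEpos : 0 < Real.exp (-2*x*T) := Real.exp_pos _
  have hE0pos : 0 < Real.exp (-(3*a*T)) := Real.exp_pos _
  set M : ℝ := min (1/1000) (a ^ 2 / 4 * Real.exp (-(3 * a * T)) / (200 * a ^ 2)) with hM
  have hMpos : 0 < M := lt_min (by norm_num) (by positivity)
  have hM1 : M ≤ 1/1000 := min_le_left _ _
  have hM2 : M ≤ a^2/4 * Real.exp (-(3*a*T)) / (200*a^2) := min_le_right _ _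
  rw [hc2]
  have hnwpos : 0 < 2*(x^2+y^2)+2*c*a*x+a^2 := by
    nlinarith [mul_nonneg (mul_nonneg hc0.le ha.le) hx, sq_nonneg y, sq_nonneg x]
  have hKpos : 0 < (2*(x^2+y^2)+2*c*a*x+a^2) + 2*δ*(c*x+a) + δ^2 := by
    nlinarith [mul_nonneg hδ0 (by positivity : (0:ℝ) ≤ c*x+a), sq_nonneg δ]
  rw [lt_div_iff₀ (mul_pos hnwpos hKpos)]
  have hstar : 8*M*(2*(x^2+y^2)+2*c*a*x+a^2) + δ^2 ≤
      ((x^2+y^2)*Real.exp (-2*x*T) + (x-a)^2 + y^2) - δ*(x-a) := by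
    rcases lt_or_ge ((x-a)^2 + y^2) (a^2/4) with h2 | h1
    · -- near `a` : use the exponential term
      have hx1 : x ≤ 3*a/2 := by nlinarith [sq_nonneg y]
      have hx2 : a/2 ≤ x := by nlinarith [sq_nonneg y]
      have huB : a^2/4 ≤ x^2+y^2 := by nlinarith [sq_nonneg y]
      have hEE : Real.exp (-(3*a*T)) ≤ Real.exp (-2*x*T) :=
        Real.exp_le_exp.mpr (by nlinarith)
      have huE : a^2/4 * Real.exp (-(3*a*T)) ≤ (x^2+y^2) * Real.exp (-2*x*T) :=
        mul_le_mul huB hEE hE0pos.le (by positivity)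
      have := auxCase2 a δ x y c M (a^2/4*Real.exp (-(3*a*T))) ((x^2+y^2)*Real.exp (-2*x*T))
        ha hx hδ0 hδa hc0.le hc3 (by positivity) hδc hMpos.le hM2 h2 huE
      linarith
    · -- away from `a` : use the `|s-a|²` term
      have := auxCase1 a δ x y c M ((x^2+y^2)*Real.exp (-2*x*T)) ha hx hδ0 hδa hc0.le hc3
        (by positivity) hMpos.le hM1 h1
      linarith
  have hcu : c*(x^2+y^2) ≤ 2*(x^2+y^2)+2*c*a*x+a^2 := by
    nlinarith [mul_nonneg (mul_nonneg hc0.le ha.le) hx,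
      mul_nonneg (show (0:ℝ) ≤ 2 - c by linarith) (by positivity : (0:ℝ) ≤ x^2+y^2)]
  have hδsq : δ*δ ≤ a*a := mul_le_mul (by linarith) (by linarith) hδ0 ha.le
  have hK4 : (2*(x^2+y^2)+2*c*a*x+a^2) + 2*δ*(c*x+a) + δ^2 ≤ 4*(2*(x^2+y^2)+2*c*a*x+a^2) := by
    nlinarith [sq_nonneg (c*x+a-δ), sq_nonneg y, hc2, hδsq, sq_nonneg δ,
      mul_nonneg (mul_nonneg hc0.le ha.le) hx]
  have final := auxAssemble M (2*(x^2+y^2)+2*c*a*x+a^2)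
    ((2*(x^2+y^2)+2*c*a*x+a^2) + 2*δ*(c*x+a) + δ^2)
    ((x^2+y^2)*Real.exp (-2*x*T) + (x-a)^2 + y^2) δ c x (x^2+y^2) a
    hMpos hnwpos hKpos (by positivity) hδ0 (by positivity)
    (mul_nonneg (mul_nonneg (by linarith : (0:ℝ) ≤ c - 1) ha.le) hx) hcu hK4 hstar
  linarith

private lemma re_div_eq (z w : ℂ) :
    (z / w).re = (z * (starRingEnd ℂ) w).re / Complex.normSq w := by
  rw [Complex.div_re, Complex.mul_re]
  simp [Complex.conj_re, Complex.conj_im]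
  ring

private lemma num_re_eq (a δ c T : ℝ) (s : ℂ) :
    ((((‖s‖ : ℝ) : ℂ) ^ 2 * Real.exp (-2 * s.re * T) +
        (starRingEnd ℂ s - (a : ℂ)) * (s - (a : ℂ) - (δ : ℂ))) *
      (starRingEnd ℂ) (((c:ℂ) * starRingEnd ℂ s + (a : ℂ)) * ((c:ℂ) * s + (a : ℂ) + (δ : ℂ)))).re
    = ((s.re^2+s.im^2)*Real.exp (-2*s.re*T) + (s.re-a)^2 + s.im^2) *
        (c^2*(s.re^2+s.im^2) + 2*c*a*s.re + a^2)
      + δ * ((s.re^2+s.im^2)*Real.exp (-2*s.re*T) + (s.re-a)^2 + s.im^2) * (c*s.re+a)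
      - δ * (c^2*(s.re^2+s.im^2) + 2*c*a*s.re + a^2) * (s.re-a)
      - δ^2 * (c*(s.re^2+s.im^2) - (c-1)*a*s.re - a^2) := by
  have habs : ((‖s‖ : ℝ) : ℂ) ^ 2 = ((s.re^2 + s.im^2 : ℝ) : ℂ) := by
    rw [← Complex.ofReal_pow, Complex.sq_norm, Complex.normSq_apply]
    push_cast
    ring
  rw [habs]
  simp only [map_mul, map_add, map_sub, Complex.conj_ofReal, Complex.conj_conj,
    Complex.mul_re, Complex.mul_im, Complex.add_re, Complex.add_im, Complex.sub_re,
    Complex.sub_im, Complex.ofReal_re, Complex.ofReal_im, Complex.conj_re, Complex.conj_im]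
  ring

private lemma den_normSq_eq (a δ c : ℝ) (s : ℂ) :
    Complex.normSq (((c:ℂ) * starRingEnd ℂ s + (a : ℂ)) * ((c:ℂ) * s + (a : ℂ) + (δ : ℂ)))
      = (c^2*(s.re^2+s.im^2) + 2*c*a*s.re + a^2) *
        ((c^2*(s.re^2+s.im^2) + 2*c*a*s.re + a^2) + 2*δ*(c*s.re+a) + δ^2) := by
  simp only [Complex.normSq_apply, Complex.mul_re, Complex.mul_im, Complex.add_re,
    Complex.add_im, Complex.ofReal_re, Complex.ofReal_im, Complex.conj_re, Complex.conj_im]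
  ring

/-- Let `T, a > 0`. For `δ ≥ 0` and `Re s ≥ 0`, set
`f_δ(s) = (|s|² e^{−2 Re(s) T} + (conj s − a)(s − a − δ)) /
          ((√2 conj s + a)(√2 s + a + δ))`.
Then there is `δ₀ > 0` such that for every `0 ≤ δ < δ₀` there is `m > 0` with
`Re (f_δ(s)) > m` for all `s` in the closed right half plane. -/
theorem re_bounded_below_uncertain_pole (T a : ℝ) (hT : 0 < T) (ha : 0 < a) :
    ∃ δ₀ > (0 : ℝ), ∀ δ : ℝ, 0 ≤ δ → δ < δ₀ →
      ∃ m > (0 : ℝ), ∀ s : ℂ, 0 ≤ s.re →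
        m < ((((‖s‖ : ℝ) : ℂ) ^ 2 * Real.exp (-2 * s.re * T) +
              (starRingEnd ℂ s - (a : ℂ)) * (s - (a : ℂ) - (δ : ℂ))) /
             (((Real.sqrt 2 : ℂ) * starRingEnd ℂ s + (a : ℂ)) *
              ((Real.sqrt 2 : ℂ) * s + (a : ℂ) + (δ : ℂ)))).re := by
  have hc2 : Real.sqrt 2 ^ 2 = 2 := Real.sq_sqrt (by norm_num)
  have hc0 : (0:ℝ) ≤ Real.sqrt 2 := Real.sqrt_nonneg 2
  have hc1 : (1:ℝ) ≤ Real.sqrt 2 := by nlinarith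
  have hc3 : Real.sqrt 2 ≤ 3/2 := by nlinarith
  refine ⟨min (a/8) (a^2/4*Real.exp (-(3*a*T))/(2*a)),
    lt_min (by positivity) (by positivity), ?_⟩
  intro δ hδ0 hδδ
  have hδa : δ ≤ a/8 := ((lt_min_iff.mp hδδ).1).le
  have hδc : δ ≤ a^2/4*Real.exp (-(3*a*T))/(2*a) := ((lt_min_iff.mp hδδ).2).le
  refine ⟨min (1/1000) (a^2/4*Real.exp (-(3*a*T))/(200*a^2)),
    lt_min (by norm_num) (by positivity), ?_⟩
  intro s hs
  rw [re_div_eq, num_re_eq a δ (Real.sqrt 2) T s, den_normSq_eq a δ (Real.sqrt 2) s]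
  exact key_ineq T a δ s.re s.im (Real.sqrt 2) hT ha hs hδ0 hc2 hc1 hc3 hδa hδc
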